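/- Let x₀ < x₁ < ⋯ < xₙ be reals and let R : [x₀,xₙ] → ℝ be a step function constant on each [xᵢ, x_{i+1}). For k < n, among all step functions M on [x₀,xₙ] with at most k pieces (given by a partition t₀ = x₀ < t₁ < ⋯ < t_k = xₙ and constant values on each piece) minimizing ∫ |R - M|, there exists one whose partition points satisfy {t₀,…,t_k} ⊆ {x₀,…,xₙ}. -/

import Mathlib

open MeasureTheory

/-- `f` is a step function with `k` pieces determined by the partition `t`. -/
def IsStepOn (f : ℝ → ℝ) (t : ℕ → ℝ) (k : ℕ) : Prop :=
  ∀ j < k, ∀ u ∈ Set.Ico (t j) (t (j+1)), f u = f (t j)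

open Set

namespace Stmt8

/-- weak monotone transitivity -/
lemma wmono {s : ℕ → ℝ} {k : ℕ} (h : ∀ j < k, s j ≤ s (j+1)) :
    ∀ a b, a ≤ b → b ≤ k → s a ≤ s b := by
  intro a b
  induction b with
  | zero => intro hab _; have : a = 0 := Nat.le_zero.1 hab; rw [this]
  | succ b ih =>
    intro hab hbk
    rcases Nat.eq_or_lt_of_le hab with h1 | h1
    · rw [h1]
    · exact le_trans (ih (by omega) (by omega)) (h b (by omega))

lemma wmono' {s : ℕ → ℝ} {k : ℕ} (h : ∀ j < k, s j ≤ s (j+1)) :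
    ∀ a b, a ≤ b → b ≤ k → s a ≤ s b := wmono h

lemma smono {s : ℕ → ℝ} {k : ℕ} (h : ∀ j < k, s j < s (j+1)) :
    ∀ a b, a < b → b ≤ k → s a < s b := by
  intro a b
  induction b with
  | zero => omega
  | succ b ih =>
    intro hab hbk
    rcases Nat.eq_or_lt_of_le (Nat.lt_succ_iff.1 hab) with h1 | h1
    · rw [h1]; exact h b (by omega)
    · exact lt_trans (ih (by omega) (by omega)) (h b (by omega))

section A
variable {n : ℕ} {x : ℕ → ℝ} {R : ℝ → ℝ}

open Classical in
lemma exists_cell (hx : ∀ i < n, x i < x (i+1)) {v : ℝ} (h0 : x 0 ≤ v) (hn : v < x n) :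
    ∃ i < n, x i ≤ v ∧ v < x (i+1) := by
  set P : ℕ → Prop := fun i => x i ≤ v with hP
  set i := Nat.findGreatest P n with hi
  have hPi : P i := Nat.findGreatest_spec (Nat.zero_le n) h0
  have hile : i ≤ n := Nat.findGreatest_le n
  have hlt : i < n := by
    rcases Nat.eq_or_lt_of_le hile with h1 | h1
    · exfalso; rw [h1] at hPi; exact absurd hPi (not_le.2 hn)
    · exact h1
  refine ⟨i, hlt, hPi, ?_⟩
  by_contra hcon
  exact Nat.findGreatest_is_greatest (Nat.lt_succ_self i) (by omega) (not_lt.1 hcon)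

lemma R_loc (hx : ∀ i < n, x i < x (i+1)) (hR : IsStepOn R x n) :
    ∀ u ∈ Ico (x 0) (x n), ∃ i < n, x i ≤ u ∧ u < x (i+1) ∧ R u = R (x i) := by
  intro u hu
  obtain ⟨i, hi, h1, h2⟩ := exists_cell hx hu.1 hu.2
  exact ⟨i, hi, h1, h2, hR i hi u ⟨h1, h2⟩⟩

lemma integrableOn_R (hx : ∀ i < n, x i < x (i+1)) (hR : IsStepOn R x n) :
    IntegrableOn R (Ico (x 0) (x n)) := by
  suffices h : ∀ m ≤ n, IntegrableOn R (Ico (x 0) (x m)) from h n le_rfl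
  intro m
  induction m with
  | zero => intro _; simp
  | succ m ih =>
    intro hm
    have hxm : x 0 ≤ x m := wmono (k := m) (fun j hj => (hx j (by omega)).le) 0 m (by omega) (by omega)
    have hxm1 : x m ≤ x (m+1) := (hx m (by omega)).le
    rw [← Ico_union_Ico_eq_Ico hxm hxm1]
    refine (ih (by omega)).union ?_
    have : IntegrableOn (fun _ => R (x m)) (Ico (x m) (x (m+1))) :=
      integrableOn_const measure_Ico_lt_top.ne
    exact this.congr_fun (fun u hu => (hR m (by omega) u hu).symm) measurableSet_Ico

lemma integrable_abs_sub (hx : ∀ i < n, x i < x (i+1)) (hR : IsStepOn R x n)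
    {a b : ℝ} (ha : x 0 ≤ a) (hb : b ≤ x n) (v : ℝ) :
    IntegrableOn (fun u => |R u - v|) (Ico a b) := by
  have h1 : IntegrableOn R (Ico a b) :=
    (integrableOn_R hx hR).mono_set (Ico_subset_Ico ha hb)
  have h2 : IntegrableOn (fun _ => v) (Ico a b) :=
    integrableOn_const measure_Ico_lt_top.ne
  exact (h1.sub h2).abs

end A

/-- piece cost -/
noncomputable def pc (R : ℝ → ℝ) (a b v : ℝ) : ℝ := ∫ u in Ico a b, |R u - v|

noncomputable def cost (R : ℝ → ℝ) (k : ℕ) (s c : ℕ → ℝ) : ℝ :=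
  ∑ j ∈ Finset.range k, pc R (s j) (s (j+1)) (c j)

section B
variable {n : ℕ} {x : ℕ → ℝ} {R : ℝ → ℝ}
variable (hx : ∀ i < n, x i < x (i+1)) (hR : IsStepOn R x n)


lemma pc_nonneg (a b v : ℝ) : 0 ≤ pc R a b v :=
  integral_nonneg (fun u => abs_nonneg _)

lemma pc_empty (a v : ℝ) : pc R a a v = by exact 0 := by
  unfold pc; rw [Ico_self]; simp

include hx hR in
lemma pc_split {a b c : ℝ} (hab : a ≤ b) (hbc : b ≤ c)
    (h0 : x 0 ≤ a) (h1 : c ≤ x n) (v : ℝ) :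
    pc R a c v = pc R a b v + pc R b c v := by
  unfold pc
  rw [← Ico_union_Ico_eq_Ico hab hbc]
  exact setIntegral_union (Ico_disjoint_Ico_same) measurableSet_Ico
    (integrable_abs_sub hx hR h0 (le_trans hbc h1) v)
    (integrable_abs_sub hx hR (le_trans h0 hab) h1 v)

include hR in
lemma pc_const {i : ℕ} (hi : i < n) {a b : ℝ} (hxa : x i ≤ a) (hab : a ≤ b)
    (hbx : b ≤ x (i+1)) (v : ℝ) :
    pc R a b v = (b - a) * |R (x i) - v| := by
  unfold pc
  rw [setIntegral_congr_fun measurableSet_Ico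
    (g := fun _ => |R (x i) - v|)
    (fun u hu => by rw [hR i hi u ⟨le_trans hxa hu.1, lt_of_lt_of_le hu.2 hbx⟩])]
  rw [setIntegral_const, measureReal_def, Real.volume_Ico, ENNReal.toReal_ofReal (by linarith [hab]), smul_eq_mul]

include hx hR in
/-- integral over [x0,xn) of |R-f| equals cost, for f piecewise `c j` on a weak partition -/
lemma integral_eq_cost {k : ℕ} {p : ℕ → ℝ} {f : ℝ → ℝ} {c : ℕ → ℝ}
    (hp0 : p 0 = x 0) (hpk : p k = x n) (hmono : ∀ j < k, p j ≤ p (j+1))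
    (hf : ∀ j < k, ∀ u ∈ Ico (p j) (p (j+1)), f u = c j) :
    (∫ u in Ico (x 0) (x n), |R u - f u|) = cost R k p c := by
  have key : ∀ m ≤ k, IntegrableOn (fun u => |R u - f u|) (Ico (p 0) (p m)) ∧
      (∫ u in Ico (p 0) (p m), |R u - f u|) = ∑ j ∈ Finset.range m, pc R (p j) (p (j+1)) (c j) := by
    intro m
    induction m with
    | zero => intro _; rw [Ico_self]; simp [IntegrableOn]
    | succ m ih =>
      intro hm
      obtain ⟨ihint, iheq⟩ := ih (by omega)
      have hplo : x 0 ≤ p m := by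
        rw [← hp0]; exact wmono (k := k) hmono 0 m (by omega) (by omega)
      have hphi : p (m+1) ≤ x n := by
        rw [← hpk]; exact wmono (k := k) hmono (m+1) k (by omega) le_rfl
      have h01 : p 0 ≤ p m := by rw [hp0] at *; exact hplo
      have hm1 : p m ≤ p (m+1) := hmono m (by omega)
      have hint2 : IntegrableOn (fun u => |R u - f u|) (Ico (p m) (p (m+1))) := by
        refine (integrable_abs_sub hx hR hplo hphi (c m)).congr_fun ?_ measurableSet_Ico
        intro u hu; simp only; rw [hf m (by omega) u hu]
      constructor
      · rw [← Ico_union_Ico_eq_Ico h01 hm1]; exact ihint.union hint2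
      · rw [← Ico_union_Ico_eq_Ico h01 hm1,
          setIntegral_union (Ico_disjoint_Ico_same) measurableSet_Ico ihint hint2,
          iheq, Finset.sum_range_succ]
        congr 1
        unfold pc
        exact setIntegral_congr_fun measurableSet_Ico
          (fun u hu => by rw [hf m (by omega) u hu])
  rw [← hp0, ← hpk]
  exact (key k le_rfl).2


include hx hR in
lemma Rmem {a b : ℝ} (ha : x 0 ≤ a) (hb : b ≤ x n) :
    ∀ u ∈ Ico a b, R u ∈ Finset.image (fun i => R (x i)) (Finset.range n) := by
  intro u hu
  obtain ⟨i, hi, _, _, hRu⟩ := R_loc hx hR u ⟨le_trans ha hu.1, lt_of_lt_of_le hu.2 hb⟩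
  exact Finset.mem_image.2 ⟨i, Finset.mem_range.2 hi, hRu.symm⟩

include hx hR in
lemma pc_mono_ptwise {a b v w : ℝ} (ha : x 0 ≤ a) (hb : b ≤ x n)
    (h : ∀ u ∈ Ico a b, |R u - v| ≤ |R u - w|) : pc R a b v ≤ pc R a b w :=
  setIntegral_mono_on (integrable_abs_sub hx hR ha hb v)
    (integrable_abs_sub hx hR ha hb w) measurableSet_Ico h

include hx hR in
lemma median (hn : 0 < n) {a b : ℝ} (ha : x 0 ≤ a) (hb : b ≤ x n) (w : ℝ) :
    ∃ i < n, pc R a b (R (x i)) ≤ pc R a b w := by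
  classical
  set F := Finset.image (fun i => R (x i)) (Finset.range n) with hF
  have hFne : F.Nonempty := ⟨R (x 0), Finset.mem_image.2 ⟨0, Finset.mem_range.2 hn, rfl⟩⟩
  have hmemF : ∀ y ∈ F, ∃ i < n, y = R (x i) := by
    intro y hy
    obtain ⟨i, hi, hiy⟩ := Finset.mem_image.1 hy
    exact ⟨i, Finset.mem_range.1 hi, hiy.symm⟩
  by_cases hwF : w ∈ F
  · obtain ⟨i, hi, hiw⟩ := hmemF w hwF
    exact ⟨i, hi, by rw [← hiw]⟩
  set Flo := F.filter (· ≤ w) with hFlo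
  set Fhi := F.filter (w ≤ ·) with hFhi
  by_cases hlo : Flo.Nonempty
  · by_cases hhi : Fhi.Nonempty
    · -- gap case
      set lo := Flo.max' hlo with hlodef
      set hi := Fhi.min' hhi with hhidef
      have hloF : lo ∈ F := (Finset.mem_filter.1 (Flo.max'_mem hlo)).1
      have hhiF : hi ∈ F := (Finset.mem_filter.1 (Fhi.min'_mem hhi)).1
      have hlow : lo < w := lt_of_le_of_ne (Finset.mem_filter.1 (Flo.max'_mem hlo)).2
        (fun h => hwF (h ▸ hloF))
      have hwhi : w < hi := lt_of_le_of_ne (Finset.mem_filter.1 (Fhi.min'_mem hhi)).2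
        (fun h => hwF (h.symm ▸ hhiF))
      have hgap : ∀ y ∈ F, y ≤ lo ∨ hi ≤ y := by
        intro y hy
        rcases le_or_gt y w with h1 | h1
        · exact Or.inl (Flo.le_max' y (Finset.mem_filter.2 ⟨hy, h1⟩))
        · exact Or.inr (Fhi.min'_le y (Finset.mem_filter.2 ⟨hy, h1.le⟩))
      set lam := (hi - w) / (hi - lo) with hlamdef
      have hhl : (0:ℝ) < hi - lo := by linarith
      have hlam : lam * (hi - lo) = hi - w := div_mul_cancel₀ _ (ne_of_gt hhl)
      have hlam0 : 0 ≤ lam := div_nonneg (by linarith) hhl.le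
      have hlam1 : lam ≤ 1 := by
        rw [div_le_one hhl]; linarith
      have hpt : ∀ u ∈ Ico a b,
          |R u - w| = lam * |R u - lo| + (1 - lam) * |R u - hi| := by
        intro u hu
        have hRuF := Rmem hx hR ha hb u hu
        rcases hgap _ hRuF with h1 | h1
        · rw [abs_of_nonpos (by linarith), abs_of_nonpos (by linarith),
            abs_of_nonpos (by linarith)]
          linear_combination hlam
        · rw [abs_of_nonneg (by linarith), abs_of_nonneg (by linarith),
            abs_of_nonneg (by linarith)]
          linear_combination -hlam
      have hcomb : pc R a b w = lam * pc R a b lo + (1 - lam) * pc R a b hi := by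
        unfold pc
        rw [setIntegral_congr_fun measurableSet_Ico hpt]
        rw [integral_add ((integrable_abs_sub hx hR ha hb lo).const_mul lam)
          ((integrable_abs_sub hx hR ha hb hi).const_mul (1 - lam)),
          integral_const_mul, integral_const_mul]
      rcases le_total (pc R a b lo) (pc R a b hi) with hc | hc
      · obtain ⟨i, hi', hiy⟩ := hmemF lo hloF
        refine ⟨i, hi', ?_⟩
        rw [← hiy, hcomb]; nlinarith
      · obtain ⟨i, hi', hiy⟩ := hmemF hi hhiF
        refine ⟨i, hi', ?_⟩
        rw [← hiy, hcomb]; nlinarith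
    · -- all values < w : use max
      have hFhi' : ∀ y ∈ F, y ≤ w := by
        intro y hy
        by_contra hcon
        exact hhi ⟨y, Finset.mem_filter.2 ⟨hy, (not_le.1 hcon).le⟩⟩
      obtain ⟨i, hi', hiy⟩ := hmemF (F.max' hFne) (F.max'_mem hFne)
      refine ⟨i, hi', ?_⟩
      rw [← hiy]
      refine pc_mono_ptwise hx hR ha hb (fun u hu => ?_)
      have h1 := F.le_max' _ (Rmem hx hR ha hb u hu)
      have h2 := hFhi' _ (F.max'_mem hFne)
      rw [abs_of_nonpos (by linarith), abs_of_nonpos (by linarith)]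
      linarith
  · -- all values > w : use min
    have hFlo' : ∀ y ∈ F, w ≤ y := by
      intro y hy
      by_contra hcon
      exact hlo ⟨y, Finset.mem_filter.2 ⟨hy, (not_le.1 hcon).le⟩⟩
    obtain ⟨i, hi', hiy⟩ := hmemF (F.min' hFne) (F.min'_mem hFne)
    refine ⟨i, hi', ?_⟩
    rw [← hiy]
    refine pc_mono_ptwise hx hR ha hb (fun u hu => ?_)
    have h1 := F.min'_le _ (Rmem hx hR ha hb u hu)
    have h2 := hFlo' _ (F.min'_mem hFne)
    rw [abs_of_nonneg (by linarith), abs_of_nonneg (by linarith)]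
    linarith

include hx hR in
lemma median_cost {k : ℕ} (hn : 0 < n) {t : ℕ → ℝ} (c : ℕ → ℝ)
    (ht0 : t 0 = x 0) (htk : t k = x n) (hmono : ∀ j < k, t j ≤ t (j+1)) :
    ∃ c' : ℕ → ℝ, (∀ j < k, ∃ i < n, c' j = R (x i)) ∧ cost R k t c' ≤ cost R k t c := by
  have hall : ∀ j : ℕ, ∃ v : ℝ, j < k →
      (∃ i < n, v = R (x i)) ∧ pc R (t j) (t (j+1)) v ≤ pc R (t j) (t (j+1)) (c j) := by
    intro j
    by_cases hj : j < k
    · have ha : x 0 ≤ t j := ht0 ▸ wmono hmono 0 j (Nat.zero_le _) (by omega)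
      have hb : t (j+1) ≤ x n := htk ▸ wmono hmono (j+1) k (by omega) le_rfl
      obtain ⟨i, hi, hle⟩ := median hx hR hn ha hb (c j)
      exact ⟨R (x i), fun _ => ⟨⟨i, hi, rfl⟩, hle⟩⟩
    · exact ⟨0, fun h => absurd h hj⟩
  choose c' hc' using hall
  refine ⟨c', fun j hj => (hc' j hj).1, ?_⟩
  unfold cost
  exact Finset.sum_le_sum (fun j hj => (hc' j (Finset.mem_range.1 hj)).2)

set_option maxHeartbeats 1600000 in
include hx hR in
lemma key {k : ℕ} (hk1 : 1 ≤ k) (hkn : k < n) :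
    ∀ m : ℕ, ∀ s c : ℕ → ℝ, s 0 = x 0 → s k = x n → (∀ j < k, s j ≤ s (j+1)) →
    ((Finset.image s (Finset.range (k+1))) \ (Finset.image x (Finset.range (n+1)))).card ≤ m →
    ∃ t c' : ℕ → ℝ, t 0 = x 0 ∧ t k = x n ∧ (∀ j < k, t j ≤ t (j+1)) ∧
      (∀ j ≤ k, ∃ i ≤ n, t j = x i) ∧ cost R k t c' ≤ cost R k s c := by
  classical
  intro m
  induction m with
  | zero =>
    intro s c hs0 hsk hmono hcard
    have hempty : (Finset.image s (Finset.range (k+1))) \ (Finset.image x (Finset.range (n+1))) = ∅ :=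
      Finset.card_eq_zero.1 (Nat.le_zero.1 hcard)
    have hsub : Finset.image s (Finset.range (k+1)) ⊆ Finset.image x (Finset.range (n+1)) :=
      Finset.sdiff_eq_empty_iff_subset.1 hempty
    refine ⟨s, c, hs0, hsk, hmono, ?_, le_rfl⟩
    intro j hj
    have : s j ∈ Finset.image x (Finset.range (n+1)) :=
      hsub (Finset.mem_image.2 ⟨j, Finset.mem_range.2 (by omega), rfl⟩)
    obtain ⟨i, hi, hix⟩ := Finset.mem_image.1 this
    exact ⟨i, by have := Finset.mem_range.1 hi; omega, hix.symm⟩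
  | succ m ih =>
    intro s c hs0 hsk hmono hcard
    by_cases hall : ∀ j ≤ k, ∃ i ≤ n, s j = x i
    · exact ⟨s, c, hs0, hsk, hmono, hall, le_rfl⟩
    push_neg at hall
    obtain ⟨j₀, hj₀k, hv⟩ := hall
    set v := s j₀ with hvdef
    have hv' : ∀ i ≤ n, v ≠ x i := fun i hi h => (hv i hi) h
    have hmono' := wmono (s := s) (k := k) hmono
    have hxmono : ∀ i i', i ≤ i' → i' ≤ n → x i ≤ x i' :=
      wmono (fun j hj => (hx j hj).le)
    have hv0 : x 0 < v := by
      rcases lt_or_eq_of_le (hs0 ▸ hmono' 0 j₀ (Nat.zero_le _) hj₀k) with h | h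
      · exact h
      · exact absurd h.symm (hv' 0 (by omega))
    have hvn : v < x n := by
      rcases lt_or_eq_of_le (hsk ▸ hmono' j₀ k hj₀k le_rfl) with h | h
      · exact h
      · exact absurd h (hv' n le_rfl)
    obtain ⟨i, hin, hxiv, hvxi1⟩ := exists_cell hx hv0.le hvn
    have hxiv' : x i < v := lt_of_le_of_ne hxiv (fun h => hv' i (by omega) h.symm)
    -- run boundaries
    have hPex : ∃ j, s j = v := ⟨j₀, rfl⟩
    set jlo := Nat.find hPex with hjlodef
    have hjlo_spec : s jlo = v := Nat.find_spec hPex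
    have hjlo_min : ∀ j < jlo, s j ≠ v := fun j hj => Nat.find_min hPex hj
    have hjlo_le : jlo ≤ j₀ := Nat.find_min' hPex rfl
    have hjlo_pos : 1 ≤ jlo := by
      rcases Nat.eq_zero_or_pos jlo with h | h
      · exfalso; exact hv' 0 (by omega) (by rw [← hs0, ← h, hjlo_spec])
      · exact h
    set jhi := Nat.findGreatest (fun j => s j = v) k with hjhidef
    have hjhi_spec : s jhi = v := Nat.findGreatest_spec (P := fun j => s j = v) hj₀k rfl
    have hjhi_le : jhi ≤ k := Nat.findGreatest_le k
    have hjhi_max : ∀ j, jhi < j → j ≤ k → s j ≠ v :=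
      fun j h1 h2 => Nat.findGreatest_is_greatest (P := fun j => s j = v) h1 h2
    have hjhi_lt : jhi < k := by
      rcases Nat.eq_or_lt_of_le hjhi_le with h | h
      · exfalso; exact hv' n le_rfl (by rw [← hsk, ← h, hjhi_spec])
      · exact h
    have hjlojhi : jlo ≤ jhi := Nat.le_findGreatest (P := fun j => s j = v) (by omega) hjlo_spec
    have hrun : ∀ j, jlo ≤ j → j ≤ jhi → s j = v :=
      fun j h1 h2 => le_antisymm (hjhi_spec ▸ hmono' j jhi h2 (by omega))
        (hjlo_spec ▸ hmono' jlo j h1 (by omega))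
    set α := s (jlo - 1) with hαdef
    set β := s (jhi + 1) with hβdef
    have hα_lt : α < v := by
      have h1 : α ≤ v := by
        rw [← hjlo_spec]; exact hmono' (jlo-1) jlo (by omega) (by omega)
      exact lt_of_le_of_ne h1 (hjlo_min (jlo-1) (by omega))
    have hβ_gt : v < β := by
      have h1 : v ≤ β := by
        rw [← hjhi_spec]; exact hmono' jhi (jhi+1) (by omega) (by omega)
      exact lt_of_le_of_ne h1 (fun h => hjhi_max (jhi+1) (by omega) (by omega) h.symm)
    -- interval of movement
    set L := max (x i) α with hLdef
    set U := min (x (i+1)) β with hUdef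
    have hLv : L < v := max_lt hxiv' hα_lt
    have hvU : v < U := lt_min hvxi1 hβ_gt
    have hLU : L ≤ U := le_of_lt (lt_trans hLv hvU)
    set A := |R (x i) - c (jlo - 1)| with hAdef
    set B := |R (x i) - c jhi| with hBdef
    set e := if A ≤ B then U else L with hedef
    have hLe : L ≤ e := by rw [hedef]; split <;> [exact hLU; exact le_rfl]
    have heU : e ≤ U := by rw [hedef]; split <;> [exact le_rfl; exact hLU]
    set s' : ℕ → ℝ := fun j => if jlo ≤ j ∧ j ≤ jhi then e else s j with hs'def
    have hs'in : ∀ j, jlo ≤ j → j ≤ jhi → s' j = e := by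
      intro j h1 h2; simp only [hs'def]; rw [if_pos ⟨h1, h2⟩]
    have hs'out : ∀ j, (j < jlo ∨ jhi < j) → s' j = s j := by
      intro j h1; simp only [hs'def]; rw [if_neg (by omega)]
    -- global bounds
    have hαx0 : x 0 ≤ α := by rw [← hs0]; exact hmono' 0 (jlo-1) (Nat.zero_le _) (by omega)
    have hβxn : β ≤ x n := by rw [← hsk]; exact hmono' (jhi+1) k (by omega) le_rfl
    have hαL : α ≤ L := le_max_right _ _
    have hUβ : U ≤ β := min_le_right _ _
    have hxiL : x i ≤ L := le_max_left _ _
    have hUxi1 : U ≤ x (i+1) := min_le_left _ _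
    -- monotonicity of s'
    have hmono2 : ∀ j < k, s' j ≤ s' (j+1) := by
      intro j hj
      by_cases h1 : jlo ≤ j ∧ j ≤ jhi
      · rw [hs'in j h1.1 h1.2]
        by_cases h2 : j + 1 ≤ jhi
        · rw [hs'in (j+1) (by omega) h2]
        · have hj2 : j = jhi := by omega
          rw [hs'out (j+1) (by omega)]
          calc e ≤ U := heU
          _ ≤ β := hUβ
          _ = s (j+1) := by rw [hβdef, hj2]
      · rw [hs'out j (by omega)]
        by_cases h2 : jlo ≤ j + 1 ∧ j + 1 ≤ jhi
        · have hj2 : j = jlo - 1 := by omega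
          rw [hs'in (j+1) h2.1 h2.2]
          calc s j = α := by rw [hαdef, hj2]
          _ ≤ L := hαL
          _ ≤ e := hLe
        · rw [hs'out (j+1) (by omega)]
          exact hmono j hj
    have hs'0 : s' 0 = x 0 := by rw [hs'out 0 (by omega)]; exact hs0
    have hs'k : s' k = x n := by rw [hs'out k (by omega)]; exact hsk
    -- the measure decreases
    have hvoff : v ∈ (Finset.image s (Finset.range (k+1))) \ (Finset.image x (Finset.range (n+1))) := by
      refine Finset.mem_sdiff.2 ⟨Finset.mem_image.2 ⟨j₀, Finset.mem_range.2 (by omega), rfl⟩, ?_⟩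
      intro hmem
      obtain ⟨i', hi', hix'⟩ := Finset.mem_image.1 hmem
      exact hv' i' (by have := Finset.mem_range.1 hi'; omega) hix'.symm
    have hsub : (Finset.image s' (Finset.range (k+1))) \ (Finset.image x (Finset.range (n+1))) ⊆
        ((Finset.image s (Finset.range (k+1))) \ (Finset.image x (Finset.range (n+1)))).erase v := by
      intro y hy
      obtain ⟨hy1, hy2⟩ := Finset.mem_sdiff.1 hy
      obtain ⟨j, hjr, hjy⟩ := Finset.mem_image.1 hy1
      have hjk : j ≤ k := by have := Finset.mem_range.1 hjr; omega
      by_cases h1 : jlo ≤ j ∧ j ≤ jhi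
      · -- y = e
        have hye : y = e := by rw [← hjy, hs'in j h1.1 h1.2]
        have hememx : e = x i ∨ e = x (i+1) ∨ e = α ∨ e = β := by
          rw [hedef]
          split
          · rcases min_choice (x (i+1)) β with h | h
            · exact Or.inr (Or.inl h)
            · exact Or.inr (Or.inr (Or.inr h))
          · rcases max_choice (x i) α with h | h
            · exact Or.inl h
            · exact Or.inr (Or.inr (Or.inl h))
        rcases hememx with h | h | h | h
        · exfalso; refine hy2 (Finset.mem_image.2 ⟨i, Finset.mem_range.2 (by omega), ?_⟩)
          rw [hye, h]
        · exfalso; refine hy2 (Finset.mem_image.2 ⟨i+1, Finset.mem_range.2 (by omega), ?_⟩)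
          rw [hye, h]
        · refine Finset.mem_erase.2 ⟨by rw [hye, h]; exact ne_of_lt hα_lt, Finset.mem_sdiff.2 ⟨?_, hy2⟩⟩
          exact Finset.mem_image.2 ⟨jlo - 1, Finset.mem_range.2 (by omega), by rw [← hαdef, ← h, ← hye]⟩
        · refine Finset.mem_erase.2 ⟨by rw [hye, h]; exact (ne_of_lt hβ_gt).symm, Finset.mem_sdiff.2 ⟨?_, hy2⟩⟩
          exact Finset.mem_image.2 ⟨jhi + 1, Finset.mem_range.2 (by omega), by rw [← hβdef, ← h, ← hye]⟩
      · have hys : y = s j := by rw [← hjy, hs'out j (by omega)]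
        refine Finset.mem_erase.2 ⟨?_, Finset.mem_sdiff.2 ⟨Finset.mem_image.2 ⟨j, hjr, hys.symm⟩, hy2⟩⟩
        rw [hys]
        rcases (by omega : j < jlo ∨ jhi < j) with h | h
        · exact hjlo_min j h
        · exact hjhi_max j h hjk
    have hcard' : ((Finset.image s' (Finset.range (k+1))) \ (Finset.image x (Finset.range (n+1)))).card ≤ m := by
      have h1 := Finset.card_le_card hsub
      rw [Finset.card_erase_of_mem hvoff] at h1
      omega
    -- cost comparison
    have hcost : cost R k s' c ≤ cost R k s c := by
      set D : Finset ℕ := {jlo - 1, jhi} with hDdef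
      have hD : D ⊆ Finset.range k := by
        intro j hj
        rw [hDdef, Finset.mem_insert, Finset.mem_singleton] at hj
        rcases hj with h | h <;> (rw [h]; exact Finset.mem_range.2 (by omega))
      have hne : jlo - 1 ≠ jhi := by omega
      have hj1 : jlo - 1 + 1 = jlo := by omega
      have hsplit : ∀ u : ℕ → ℝ, cost R k u c =
          (∑ j ∈ Finset.range k \ D, pc R (u j) (u (j+1)) (c j)) +
          (pc R (u (jlo-1)) (u jlo) (c (jlo-1)) + pc R (u jhi) (u (jhi+1)) (c jhi)) := by
        intro u
        rw [cost, ← Finset.sum_sdiff hD]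
        congr 1
        rw [hDdef, Finset.sum_pair hne, hj1]
      rw [hsplit s', hsplit s]
      have hsame : ∀ j ∈ Finset.range k \ D,
          pc R (s' j) (s' (j+1)) (c j) = pc R (s j) (s (j+1)) (c j) := by
        intro j hj
        obtain ⟨hj1', hj2'⟩ := Finset.mem_sdiff.1 hj
        have hjk' : j < k := Finset.mem_range.1 hj1'
        rw [hDdef, Finset.mem_insert, Finset.mem_singleton] at hj2'
        push_neg at hj2'
        rcases (by omega : j + 1 ≤ jlo - 1 ∨ jhi < j ∨ (jlo ≤ j ∧ j + 1 ≤ jhi)) with h | h | h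
        · rw [hs'out j (by omega), hs'out (j+1) (by omega)]
        · rw [hs'out j (by omega), hs'out (j+1) (by omega)]
        · rw [hs'in j h.1 (by omega), hs'in (j+1) (by omega) h.2,
            hrun j h.1 (by omega), hrun (j+1) (by omega) h.2, pc_empty, pc_empty]
      rw [Finset.sum_congr rfl hsame]
      have hend1 : s' (jlo - 1) = α := hs'out (jlo-1) (by omega)
      have hend2 : s' jlo = e := hs'in jlo le_rfl hjlojhi
      have hend3 : s' jhi = e := hs'in jhi hjlojhi le_rfl
      have hend4 : s' (jhi+1) = β := hs'out (jhi+1) (by omega)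
      rw [hend1, hend2, hend3, hend4, hjlo_spec, hjhi_spec]
      have hexp : ∀ p : ℝ, L ≤ p → p ≤ U →
          pc R α p (c (jlo-1)) + pc R p β (c jhi) =
          pc R α L (c (jlo-1)) + (p - L) * A + ((U - p) * B + pc R U β (c jhi)) := by
        intro p hLp hpU
        have hp_xn : p ≤ x n := le_trans hpU (le_trans hUβ hβxn)
        have hx0p : x 0 ≤ p := le_trans hαx0 (le_trans hαL hLp)
        rw [pc_split hx hR hαL hLp hαx0 hp_xn,
            pc_split hx hR hpU hUβ hx0p hβxn,
            pc_const hR hin hxiL hLp (le_trans hpU hUxi1) (c (jlo-1)),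
            pc_const hR hin (le_trans hxiL hLp) hpU hUxi1 (c jhi)]
      have hfin : (e - L) * A + (U - e) * B ≤ (v - L) * A + (U - v) * B := by
        have hA0 : 0 ≤ A := hAdef ▸ abs_nonneg _
        have hB0 : 0 ≤ B := hBdef ▸ abs_nonneg _
        have hLv' : L ≤ v := hLv.le
        have hvU' : v ≤ U := hvU.le
        clear_value A B L U e v
        rcases le_or_gt A B with h | h
        · have he : e = U := by rw [hedef, if_pos h]
          rw [he]
          nlinarith [mul_nonneg (sub_nonneg.2 h) (sub_nonneg.2 hvU')]
        · have he : e = L := by rw [hedef, if_neg (not_le.2 h)]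
          rw [he]
          nlinarith [mul_nonneg (sub_nonneg.2 h.le) (sub_nonneg.2 hLv')]
      linarith [hexp e hLe heU, hexp v hLv.le hvU.le, hfin]
    obtain ⟨t, c', ht0, htk, htmono, htgrid, htle⟩ := ih s' c hs'0 hs'k hmono2 hcard'
    exact ⟨t, c', ht0, htk, htmono, htgrid, le_trans htle hcost⟩


end B
end Stmt8

open Stmt8 in
set_option maxHeartbeats 1600000 in
/-- Among all step functions with (at most) k pieces on [x₀,xₙ] minimizing ∫|R - M|,
there is one whose partition points lie among the original breakpoints of R. -/
theorem stmt_8 (n k : ℕ) (hk1 : 1 ≤ k) (hk : k < n) (x : ℕ → ℝ)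
    (hx : ∀ i < n, x i < x (i+1))
    (R : ℝ → ℝ) (hR : IsStepOn R x n) :
    ∃ (t : ℕ → ℝ) (M : ℝ → ℝ),
      t 0 = x 0 ∧ t k = x n ∧ (∀ j < k, t j < t (j+1)) ∧ IsStepOn M t k ∧
      (∀ j ≤ k, ∃ i ≤ n, t j = x i) ∧
      ∀ (s : ℕ → ℝ) (N : ℝ → ℝ),
        s 0 = x 0 → s k = x n → (∀ j < k, s j < s (j+1)) → IsStepOn N s k →
        (∫ u in Set.Ico (x 0) (x n), |R u - M u|) ≤
          ∫ u in Set.Ico (x 0) (x n), |R u - N u| := by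
  classical
  have hxmono : ∀ i i', i ≤ i' → i' ≤ n → x i ≤ x i' := wmono (fun j hj => (hx j hj).le)
  have hxstrict : ∀ i i', i < i' → i' ≤ n → x i < x i' := smono hx
  -- finite candidate search space
  set dt : ((Fin (k+1) → Fin (n+1)) × (Fin k → Fin n)) → (ℕ → ℝ) :=
    fun z j => if h : j ≤ k then x (z.1 ⟨j, by omega⟩) else x n with hdt
  set dc : ((Fin (k+1) → Fin (n+1)) × (Fin k → Fin n)) → (ℕ → ℝ) :=
    fun z j => if h : j < k then R (x (z.2 ⟨j, h⟩)) else 0 with hdc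
  have hdt_eq : ∀ z j (h : j ≤ k), dt z j = x (z.1 ⟨j, by omega⟩) := by
    intro z j h; simp only [hdt]; rw [dif_pos h]
  have hdc_eq : ∀ z j (h : j < k), dc z j = R (x (z.2 ⟨j, h⟩)) := by
    intro z j h; simp only [hdc]; rw [dif_pos h]
  set valid : ((Fin (k+1) → Fin (n+1)) × (Fin k → Fin n)) → Prop :=
    fun z => dt z 0 = x 0 ∧ dt z k = x n ∧ ∀ j < k, dt z j ≤ dt z (j+1) with hvalid
  set Cands := Finset.univ.filter valid with hCands
  have hCne : Cands.Nonempty := by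
    refine ⟨(fun j => ⟨if (j : ℕ) = k then n else min j (n-1), by split <;> omega⟩,
      fun _ => ⟨0, by omega⟩), Finset.mem_filter.2 ⟨Finset.mem_univ _, ?_, ?_, ?_⟩⟩
    · rw [hdt_eq _ 0 (by omega)]
      show x (if (0:ℕ) = k then n else min 0 (n-1)) = x 0
      rw [if_neg (by omega : ¬ ((0:ℕ) = k))]
      congr 1
    · rw [hdt_eq _ k le_rfl]
      show x (if k = k then n else min k (n-1)) = x n
      rw [if_pos rfl]
    · intro j hj
      rw [hdt_eq _ j (by omega), hdt_eq _ (j+1) (by omega)]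
      show x (if j = k then n else min j (n-1)) ≤ x (if j+1 = k then n else min (j+1) (n-1))
      rw [if_neg (by omega : ¬ (j = k))]
      by_cases h2 : j + 1 = k
      · rw [if_pos h2]
        exact hxmono _ _ (by omega) le_rfl
      · rw [if_neg h2]
        exact hxmono _ _ (by omega) (by omega)
  obtain ⟨zs, hzsmem, hzsmin⟩ :=
    Finset.exists_min_image Cands (fun z => cost R k (dt z) (dc z)) hCne
  have hzsvalid : valid zs := (Finset.mem_filter.1 hzsmem).2
  obtain ⟨hts0, htsk, htsmono⟩ := hzsvalid
  set ts := dt zs with hts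
  set cs := dc zs with hcs
  -- index function a with x ∘ a = ts
  set a : ℕ → ℕ := fun j => if h : j ≤ k then (zs.1 ⟨j, by omega⟩ : ℕ) else n with ha
  have hxa : ∀ j, j ≤ k → x (a j) = ts j := by
    intro j h; simp only [ha]; rw [dif_pos h, hts, hdt_eq _ j h]
  have haln : ∀ j, a j ≤ n := by
    intro j; simp only [ha]; split
    · exact Nat.lt_succ_iff.1 (Fin.is_lt _)
    · exact le_rfl
  have ha0 : a 0 = 0 := by
    by_contra hcon
    have h1 : x 0 < x (a 0) := hxstrict 0 (a 0) (by omega) (haln 0)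
    rw [hxa 0 (by omega), hts0] at h1
    exact lt_irrefl _ h1
  have hak : a k = n := by
    by_contra hcon
    have h1 : x (a k) < x n := hxstrict (a k) n (lt_of_le_of_ne (haln k) hcon) le_rfl
    rw [hxa k le_rfl, htsk] at h1
    exact lt_irrefl _ h1
  have hamono : ∀ j < k, a j ≤ a (j+1) := by
    intro j hj
    by_contra hcon
    have h1 : x (a (j+1)) < x (a j) := hxstrict _ _ (by omega) (haln j)
    rw [hxa j (by omega), hxa (j+1) (by omega)] at h1
    exact absurd (htsmono j hj) (not_le.2 h1)
  -- extend image of a to a (k+1)-element subset of range (n+1)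
  have hSsub : Finset.image a (Finset.range (k+1)) ⊆ Finset.range (n+1) := by
    intro y hy
    obtain ⟨j, _, hjy⟩ := Finset.mem_image.1 hy
    rw [← hjy]; exact Finset.mem_range.2 (by have := haln j; omega)
  obtain ⟨T, hST, hTsub, hTcard⟩ := Finset.exists_subsuperset_card_eq (n := k+1) hSsub
    (le_trans Finset.card_image_le (by simp)) (by simp; omega)
  set iso := T.orderIsoOfFin hTcard with hiso
  set b : ℕ → ℕ := fun j => if h : j < k + 1 then (iso ⟨j, h⟩ : ℕ) else n + j with hb
  have hb_eq : ∀ j (h : j < k+1), b j = (iso ⟨j, h⟩ : ℕ) := by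
    intro j h; simp only [hb]; rw [dif_pos h]
  have hbmemT : ∀ j, j ≤ k → b j ∈ T := by
    intro j h; rw [hb_eq j (by omega)]; exact (iso _).2
  have hbln : ∀ j, j ≤ k → b j ≤ n := by
    intro j h
    have := hTsub (hbmemT j h)
    have := Finset.mem_range.1 this
    omega
  have hbstrict : ∀ j < k, b j < b (j+1) := by
    intro j hj
    rw [hb_eq j (by omega), hb_eq (j+1) (by omega)]
    exact Subtype.coe_lt_coe.2 (iso.strictMono (by exact Fin.mk_lt_mk.2 (by omega)))
  have haT : ∀ j, j ≤ k → a j ∈ T := by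
    intro j h
    exact hST (Finset.mem_image.2 ⟨j, Finset.mem_range.2 (by omega), rfl⟩)
  have hb0 : b 0 = 0 := by
    obtain ⟨j', hj'⟩ := iso.surjective ⟨0, ha0 ▸ haT 0 (by omega)⟩
    have h1 : b 0 ≤ ((⟨0, ha0 ▸ haT 0 (by omega)⟩ : T) : ℕ) := by
      rw [← hj', hb_eq 0 (by omega)]
      exact Subtype.coe_le_coe.2 (iso.monotone (Fin.zero_le j'))
    have h2 : b 0 ≤ 0 := by simpa using h1
    omega
  have hbk : b k = n := by
    obtain ⟨j', hj'⟩ := iso.surjective ⟨n, hak ▸ haT k le_rfl⟩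
    have h1 : ((⟨n, hak ▸ haT k le_rfl⟩ : T) : ℕ) ≤ b k := by
      rw [← hj', hb_eq k (by omega)]
      exact Subtype.coe_le_coe.2 (iso.monotone (Fin.le_last j'))
    have h2 : n ≤ b k := by simpa using h1
    have := hbln k le_rfl
    omega
  have hgapfree : ∀ j < k, ∀ j' ≤ k, a j' ≤ b j ∨ b (j+1) ≤ a j' := by
    intro j hj j' hj'
    by_contra hcon
    push_neg at hcon
    obtain ⟨h1, h2⟩ := hcon
    obtain ⟨j'', hj''⟩ := iso.surjective ⟨a j', haT j' hj'⟩
    have e1 : a j' = (iso j'' : ℕ) := by rw [hj'']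
    rw [hb_eq j (by omega), e1] at h1
    rw [hb_eq (j+1) (by omega), e1] at h2
    have l1 : (⟨j, by omega⟩ : Fin (k+1)) < j'' := by
      have := Subtype.coe_lt_coe.1 h1
      exact iso.lt_iff_lt.1 this
    have l2 : j'' < (⟨j+1, by omega⟩ : Fin (k+1)) := by
      have := Subtype.coe_lt_coe.1 h2
      exact iso.lt_iff_lt.1 this
    rw [Fin.lt_def] at l1 l2
    simp at l1 l2
    omega
  -- the minimizing step function
  set t' : ℕ → ℝ := fun j => x (b j) with ht'
  set M : ℝ → ℝ := fun u => cs (Nat.findGreatest (fun j' => ts j' ≤ u) (k-1)) with hM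
  have ht'0 : t' 0 = x 0 := by rw [ht']; simp only []; rw [hb0]
  have ht'k : t' k = x n := by rw [ht']; simp only []; rw [hbk]
  have ht'strict : ∀ j < k, t' j < t' (j+1) := by
    intro j hj
    exact hxstrict _ _ (hbstrict j hj) (hbln (j+1) (by omega))
  have ht'grid : ∀ j ≤ k, ∃ i ≤ n, t' j = x i := fun j hj => ⟨b j, hbln j hj, rfl⟩
  -- dichotomy of ts-breakpoints relative to a t'-piece
  have hdicho : ∀ j < k, ∀ j' ≤ k, ts j' ≤ t' j ∨ t' (j+1) ≤ ts j' := by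
    intro j hj j' hj'
    rcases hgapfree j hj j' hj' with h | h
    · left; rw [← hxa j' hj']; exact hxmono _ _ h (hbln j (by omega))
    · right; rw [← hxa j' hj']; exact hxmono _ _ h (haln j')
  have hMconst : ∀ j < k, ∀ u ∈ Set.Ico (t' j) (t' (j+1)),
      Nat.findGreatest (fun j' => ts j' ≤ u) (k-1) =
      Nat.findGreatest (fun j' => ts j' ≤ t' j) (k-1) := by
    intro j hj u hu
    set jm := Nat.findGreatest (fun j' => ts j' ≤ t' j) (k-1) with hjm
    have hspec := (Nat.findGreatest_eq_iff (m := jm) (k := k-1)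
      (P := fun j' => ts j' ≤ t' j)).1 rfl
    obtain ⟨hm1, hm2, hm3⟩ := hspec
    refine (Nat.findGreatest_eq_iff (m := jm) (k := k-1)
      (P := fun j' => ts j' ≤ u)).2 ⟨hm1, ?_, ?_⟩
    · intro hne
      exact le_trans (hm2 hne) hu.1
    · intro j'' h1 h2
      have hnle := hm3 h1 h2
      simp only [not_le] at hnle ⊢
      rcases hdicho j hj j'' (by omega) with h | h
      · exact absurd h (not_le.2 hnle)
      · exact lt_of_lt_of_le hu.2 h
  have hMstep : IsStepOn M t' k := by
    intro j hj u hu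
    rw [hM]
    simp only []
    rw [hMconst j hj u hu]
  -- M equals cs j on ts-pieces
  have hMts : ∀ j < k, ∀ u ∈ Set.Ico (ts j) (ts (j+1)), M u = cs j := by
    intro j hj u hu
    rw [hM]
    simp only []
    congr 1
    refine (Nat.findGreatest_eq_iff (m := j) (k := k-1)
      (P := fun j' => ts j' ≤ u)).2 ⟨by omega, fun _ => hu.1, ?_⟩
    intro j'' h1 h2
    simp only [not_le]
    calc u < ts (j+1) := hu.2
    _ ≤ ts j'' := wmono htsmono (j+1) j'' (by omega) (by omega)
  -- integral identities
  have hintM : (∫ u in Set.Ico (x 0) (x n), |R u - M u|) = cost R k ts cs :=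
    integral_eq_cost hx hR hts0 htsk htsmono hMts
  -- final statement
  refine ⟨t', M, ht'0, ht'k, ht'strict, hMstep, ht'grid, ?_⟩
  intro s N hs0 hsk hsmono hNstep
  have hintN : (∫ u in Set.Ico (x 0) (x n), |R u - N u|) = cost R k s (fun j => N (s j)) :=
    integral_eq_cost hx hR hs0 hsk (fun j hj => (hsmono j hj).le)
      (fun j hj u hu => hNstep j hj u hu)
  rw [hintM, hintN]
  -- reduce opponent to grid partition
  obtain ⟨t, c, ht0, htk, htmono, htgrid, htle⟩ := key hx hR hk1 hk
    ((Finset.image s (Finset.range (k+1)) \ Finset.image x (Finset.range (n+1))).card)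
    s (fun j => N (s j)) hs0 hsk (fun j hj => (hsmono j hj).le) le_rfl
  obtain ⟨c', hc'vals, hc'le⟩ := median_cost hx hR (by omega) c ht0 htk htmono
  -- encode (t, c') as an element of the candidate space
  have hsig : ∀ j : Fin (k+1), ∃ i : Fin (n+1), t j = x i := by
    intro j
    obtain ⟨i, hi, hti⟩ := htgrid j (by omega)
    exact ⟨⟨i, by omega⟩, hti⟩
  choose sig hsigspec using hsig
  have hrho : ∀ j : Fin k, ∃ i : Fin n, c' j = R (x i) := by
    intro j
    obtain ⟨i, hi, hci⟩ := hc'vals j j.is_lt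
    exact ⟨⟨i, hi⟩, hci⟩
  choose rho hrhospec using hrho
  set z : (Fin (k+1) → Fin (n+1)) × (Fin k → Fin n) := (sig, rho) with hz
  have hdtz : ∀ j, j ≤ k → dt z j = t j := by
    intro j hj
    rw [hdt_eq z j hj]
    exact (hsigspec ⟨j, by omega⟩).symm
  have hdcz : ∀ j, j < k → dc z j = c' j := by
    intro j hj
    rw [hdc_eq z j hj]
    exact (hrhospec ⟨j, hj⟩).symm
  have hzvalid : valid z := by
    refine ⟨?_, ?_, ?_⟩
    · rw [hdtz 0 (by omega)]; exact ht0
    · rw [hdtz k le_rfl]; exact htk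
    · intro j hj
      rw [hdtz j (by omega), hdtz (j+1) (by omega)]
      exact htmono j hj
  have hcostz : cost R k (dt z) (dc z) = cost R k t c' := by
    unfold cost
    refine Finset.sum_congr rfl (fun j hj => ?_)
    have hjk := Finset.mem_range.1 hj
    rw [hdtz j (by omega), hdtz (j+1) (by omega), hdcz j hjk]
  have hmin := hzsmin z (Finset.mem_filter.2 ⟨Finset.mem_univ _, hzvalid⟩)
  calc cost R k ts cs ≤ cost R k (dt z) (dc z) := hmin
  _ = cost R k t c' := hcostz
  _ ≤ cost R k t c := hc'le
  _ ≤ cost R k s (fun j => N (s j)) := htle
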